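/- For any connected graph G on m vertices and any instance with n agents having additive utilities, the egalitarian price of connectivity is at most m - n + 1. Concretely: if an allocation (M_1,...,M_n) achieves egalitarian welfare W > 0, then each bundle M_i is nonempty with at most m - n + 1 items, so giving each agent her most valued item from M_i yields each agent utility at least W/(m-n+1), and this partial allocation extends to a connected allocation. -/

import Mathlib

/-- A bundle is connected if it is empty or induces a connected subgraph. -/
def ConnB {V : Type*} (G : SimpleGraph V) (s : Finset V) : Prop :=
  s = ∅ ∨ (G.induce (s : Set V)).Connected

/-- An allocation: a partition of the vertex set into `n` (possibly empty) bundles. -/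
def IsAlloc {V : Type*} [Fintype V] [DecidableEq V] {n : ℕ} (A : Fin n → Finset V) : Prop :=
  (∀ i j : Fin n, i ≠ j → Disjoint (A i) (A j)) ∧ Finset.univ.biUnion A = Finset.univ

private lemma walk_crossing {V : Type*} (G : SimpleGraph V) (s : Set V) :
    ∀ {x y : V}, G.Walk x y → x ∈ s → y ∉ s → ∃ a b, G.Adj a b ∧ a ∈ s ∧ b ∉ s := by
  intro x y w
  induction w with
  | nil => intro hx hy; exact absurd hx hy
  | @cons x' z y' h p ih =>
    intro hx hy
    by_cases hz : z ∈ s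
    · exact ih hz hy
    · exact ⟨x', z, h, hx, hz⟩

private lemma connB_insert {V : Type*} [DecidableEq V] (G : SimpleGraph V) {s : Finset V}
    {a b : V} (hs : (G.induce (s : Set V)).Connected) (hab : G.Adj a b) (hb : b ∈ s) :
    (G.induce ((insert a s : Finset V) : Set V)).Connected := by
  have hset : ((insert a s : Finset V) : Set V) = ({a, b} : Set V) ∪ (s : Set V) := by
    ext x
    simp only [Finset.coe_insert, Set.mem_insert_iff, Set.mem_union, Finset.mem_coe]
    constructor
    · rintro (rfl | h) <;> tauto
    · rintro ((rfl | rfl) | h) <;> tauto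
  rw [hset]
  exact SimpleGraph.induce_union_connected (SimpleGraph.induce_pair_connected_of_adj hab).preconnected hs.preconnected
    ⟨b, by simp, hb⟩

private lemma singleton_connB {V : Type*} (G : SimpleGraph V) (v : V) :
    (G.induce ({v} : Set V)).Connected := by
  rw [SimpleGraph.connected_iff]
  refine ⟨fun x y => ?_, ⟨⟨v, rfl⟩⟩⟩
  have : x = y := Subtype.ext (x.2.trans y.2.symm)
  rw [this]

private lemma extend_alloc {V : Type*} [Fintype V] [DecidableEq V] (G : SimpleGraph V)
    (hG : G.Connected) {n : ℕ} (hn : 1 ≤ n) :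
    ∀ k (B : Fin n → Finset V),
      (∀ i j, i ≠ j → Disjoint (B i) (B j)) →
      (∀ i, (B i).Nonempty) →
      (∀ i, (G.induce (B i : Set V)).Connected) →
      (Finset.univ \ Finset.univ.biUnion B).card = k →
      ∃ C : Fin n → Finset V, (∀ i, B i ⊆ C i) ∧ IsAlloc C ∧
        ∀ i, (G.induce (C i : Set V)).Connected := by
  intro k
  induction k with
  | zero =>
    intro B hdisj hne hconn hcard
    refine ⟨B, fun i => subset_rfl, ⟨hdisj, ?_⟩, hconn⟩
    have h := Finset.card_eq_zero.mp hcard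
    rw [Finset.sdiff_eq_empty_iff_subset] at h
    exact Finset.Subset.antisymm (Finset.subset_univ _) h
  | succ k ih =>
    intro B hdisj hne hconn hcard
    set S := Finset.univ.biUnion B with hS
    obtain ⟨y, hy⟩ : (Finset.univ \ S).Nonempty := by
      rw [← Finset.card_pos, hcard]; omega
    have hyS : y ∉ S := (Finset.mem_sdiff.mp hy).2
    obtain ⟨x, hx⟩ := hne ⟨0, hn⟩
    have hxS : x ∈ S := Finset.mem_biUnion.mpr ⟨⟨0, hn⟩, Finset.mem_univ _, hx⟩
    obtain ⟨a, b, hab, haS, hbS⟩ :=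
      walk_crossing G (↑S : Set V) ((hG.preconnected x y).some) (by simpa using hxS)
        (by simpa using hyS)
    have hbS' : b ∉ S := by simpa using hbS
    have haS2 : a ∈ Finset.univ.biUnion B := by rw [← hS]; simpa using haS
    obtain ⟨i, _, hai⟩ := Finset.mem_biUnion.mp haS2
    set B' : Fin n → Finset V := fun j => if j = i then insert b (B i) else B j with hB'
    have hBsub : ∀ j, B j ⊆ B' j := by
      intro j z hz
      simp only [hB']
      split
      · next h => rw [h] at hz; exact Finset.mem_insert_of_mem hz
      · exact hz
    have hbnot : ∀ j, b ∉ B j := fun j hj =>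
      hbS' (Finset.mem_biUnion.mpr ⟨j, Finset.mem_univ _, hj⟩)
    have hdisj' : ∀ p q, p ≠ q → Disjoint (B' p) (B' q) := by
      intro p q hpq
      simp only [hB']
      split <;> split
      · next h1 h2 => exact absurd (h1.trans h2.symm) hpq
      · next h1 h2 =>
        rw [Finset.disjoint_insert_left]
        exact ⟨hbnot q, hdisj i q fun h => h2 h.symm⟩
      · next h1 h2 =>
        rw [Finset.disjoint_insert_right]
        exact ⟨hbnot p, hdisj p i h1⟩
      · exact hdisj p q hpq
    have hne' : ∀ j, (B' j).Nonempty := by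
      intro j
      exact (hne j).mono (hBsub j)
    have hconn' : ∀ j, (G.induce (B' j : Set V)).Connected := by
      intro j
      have hBj : B' j = if j = i then insert b (B i) else B j := by rw [hB']
      by_cases hji : j = i
      · rw [hBj, if_pos hji]
        exact connB_insert G (hconn i) hab.symm hai
      · rw [hBj, if_neg hji]
        exact hconn j
    have hunion : Finset.univ.biUnion B' = insert b S := by
      ext z
      simp only [Finset.mem_biUnion, Finset.mem_univ, true_and, Finset.mem_insert, hS, hB']
      constructor
      · rintro ⟨j, hj⟩
        by_cases hji : j = i
        · rw [if_pos hji] at hj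
          rcases Finset.mem_insert.mp hj with h | h
          · exact Or.inl h
          · exact Or.inr ⟨i, h⟩
        · rw [if_neg hji] at hj
          exact Or.inr ⟨j, hj⟩
      · rintro (rfl | ⟨j, hj⟩)
        · exact ⟨i, by simp⟩
        · exact ⟨j, hBsub j hj⟩
    have hcard' : (Finset.univ \ Finset.univ.biUnion B').card = k := by
      rw [hunion, Finset.sdiff_insert]
      rw [Finset.card_erase_of_mem (Finset.mem_sdiff.mpr ⟨Finset.mem_univ b, hbS'⟩), hcard]
      omega
    obtain ⟨C, hsub, hC, hCconn⟩ := ih B' hdisj' hne' hconn' hcard'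
    exact ⟨C, fun j => (hBsub j).trans (hsub j), hC, hCconn⟩

/-- for any connected graph on `m` vertices and `n ≤ m` agents with additive
nonnegative utilities, if an allocation achieves egalitarian welfare `W > 0`, then there is a
connected allocation giving every agent utility at least `W / (m - n + 1)`; hence the
egalitarian price of connectivity is at most `m - n + 1`. -/
theorem egal_poc_upper_any_graph {V : Type*} [Fintype V] [DecidableEq V]
    (G : SimpleGraph V) (hG : G.Connected) (m n : ℕ)
    (hm : Fintype.card V = m) (hn1 : 1 ≤ n) (hnm : n ≤ m)
    (u : Fin n → V → ℝ) (hu : ∀ i v, 0 ≤ u i v)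
    (A : Fin n → Finset V) (hA : IsAlloc A)
    (W : ℝ) (hW0 : 0 < W) (hW : ∀ i, W ≤ ∑ v ∈ A i, u i v) :
    ∃ B : Fin n → Finset V, IsAlloc B ∧ (∀ i, ConnB G (B i)) ∧
      ∀ i, W / ((m - n + 1 : ℕ) : ℝ) ≤ ∑ v ∈ B i, u i v := by
  obtain ⟨hdisj, hcover⟩ := hA
  -- each bundle is nonempty
  have hne : ∀ i, (A i).Nonempty := by
    intro i
    rw [Finset.nonempty_iff_ne_empty]
    intro h
    have := hW i
    rw [h, Finset.sum_empty] at this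
    linarith
  -- total cards
  have hsumcard : ∑ i, (A i).card = m := by
    rw [← hm, ← Finset.card_univ, ← hcover,
      Finset.card_biUnion (fun i _ j _ h => hdisj i j h)]
  -- card bound
  have hcardle : ∀ i, (A i).card ≤ m - n + 1 := by
    intro i
    have h1 : ∑ j ∈ Finset.univ.erase i, (A j).card + (A i).card = m := by
      rw [← hsumcard, Finset.sum_erase_add _ _ (Finset.mem_univ i)]
    have h2 : (Finset.univ.erase i).card ≤ ∑ j ∈ Finset.univ.erase i, (A j).card := by
      calc (Finset.univ.erase i).card = ∑ _j ∈ Finset.univ.erase i, 1 := by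
            rw [Finset.sum_const, smul_eq_mul, mul_one]
        _ ≤ _ := Finset.sum_le_sum fun j _ => Finset.card_pos.mpr (hne j)
    have h3 : (Finset.univ.erase i).card = n - 1 := by
      rw [Finset.card_erase_of_mem (Finset.mem_univ i), Finset.card_univ, Fintype.card_fin]
    omega
  -- choose best vertex in each bundle
  have hbest : ∀ i, ∃ v ∈ A i, W / ((m - n + 1 : ℕ) : ℝ) ≤ u i v := by
    intro i
    obtain ⟨v, hv, hvmax⟩ := Finset.exists_max_image (A i) (u i) (hne i)
    refine ⟨v, hv, ?_⟩
    have hsum : ∑ w ∈ A i, u i w ≤ (A i).card * u i v := by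
      calc ∑ w ∈ A i, u i w ≤ ∑ _w ∈ A i, u i v := Finset.sum_le_sum fun w hw => hvmax w hw
        _ = (A i).card * u i v := by rw [Finset.sum_const, nsmul_eq_mul]
    have hcpos : (0 : ℝ) < (A i).card := by
      exact_mod_cast Finset.card_pos.mpr (hne i)
    have hWle : W ≤ (A i).card * u i v := le_trans (hW i) hsum
    have huv : W / ((A i).card : ℝ) ≤ u i v := by
      rw [div_le_iff₀ hcpos]; linarith [hWle]
    refine le_trans ?_ huv
    apply div_le_div_of_nonneg_left hW0.le hcpos
    exact_mod_cast hcardle i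
  choose v hv hvW using hbest
  -- singletons
  set B0 : Fin n → Finset V := fun i => {v i} with hB0
  have hdisj0 : ∀ i j, i ≠ j → Disjoint (B0 i) (B0 j) := by
    intro i j hij
    simp only [hB0, Finset.disjoint_singleton]
    intro h
    exact (Finset.disjoint_left.mp (hdisj i j hij)) (hv i) (h ▸ hv j)
  have hne0 : ∀ i, (B0 i).Nonempty := fun i => ⟨v i, Finset.mem_singleton_self _⟩
  have hconn0 : ∀ i, (G.induce (B0 i : Set V)).Connected := by
    intro i
    have : (B0 i : Set V) = {v i} := by simp [hB0]
    rw [this]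
    exact singleton_connB G (v i)
  obtain ⟨C, hsub, hC, hCconn⟩ := extend_alloc G hG hn1 _ B0 hdisj0 hne0 hconn0 rfl
  refine ⟨C, hC, fun i => Or.inr (hCconn i), fun i => ?_⟩
  have hvC : v i ∈ C i := hsub i (Finset.mem_singleton_self _)
  calc W / ((m - n + 1 : ℕ) : ℝ) ≤ u i (v i) := hvW i
    _ ≤ ∑ w ∈ C i, u i w := Finset.single_le_sum (fun w _ => hu i w) hvC
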